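/- For every l ≥ 1, 1 − (0.1)^l · (1 + l + (0.1)·l) > 0; consequently, for all v ≥ 1, D(v−1‖v−0.1) − 2·D(v‖v−0.1) = Σ_{l≥1} (1/(v^l l(l+1)))·(1 − (0.1)^l(1 + 1.1·l)) > 0. -/

import Mathlib

noncomputable def D (x y : ℝ) : ℝ := x * Real.log (x / y) - x + y

open Real Finset

lemma hs_log {x : ℝ} (h : |x| < 1) :
    HasSum (fun n : ℕ => x ^ (n + 1) / (n + 1)) (-Real.log (1 - x)) :=
  Real.hasSum_pow_div_log_of_abs_lt_one h

lemma hs_shift {x : ℝ} (h : |x| < 1) :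
    HasSum (fun n : ℕ => x ^ (n + 2) / ((n : ℝ) + 2)) (-Real.log (1 - x) - x) := by
  have h1 := hs_log h
  have h2 := (hasSum_nat_add_iff' (f := fun n : ℕ => x ^ (n + 1) / ((n : ℝ) + 1)) 1).mpr h1
  simp only [Finset.range_one, Finset.sum_singleton, Nat.cast_zero, pow_one, zero_add,
    div_one] at h2
  convert h2 using 2 with n
  · rfl
  push_cast
  ring_nf

lemma hs_C {x : ℝ} (h0 : x ≠ 0) (h : |x| < 1) :
    HasSum (fun n : ℕ => x ^ (n + 1) / ((n : ℝ) + 2)) ((-Real.log (1 - x) - x) / x) := by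
  have h2 := (hs_shift h).mul_right x⁻¹
  have : (fun n : ℕ => x ^ (n + 2) / ((n : ℝ) + 2) * x⁻¹) =
      fun n : ℕ => x ^ (n + 1) / ((n : ℝ) + 2) := by
    funext n
    field_simp
    ring
  rw [this] at h2
  simpa [div_eq_mul_inv] using h2

lemma hs_F {x : ℝ} (h0 : x ≠ 0) (h : |x| < 1) :
    HasSum (fun n : ℕ => x ^ (n + 1) / (((n : ℝ) + 1) * ((n : ℝ) + 2)))
      ((1 - 1 / x) * (-Real.log (1 - x)) + 1) := by
  have h2 := (hs_log h).sub (hs_C h0 h)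
  have he : (fun n : ℕ => x ^ (n + 1) / ((n : ℝ) + 1) - x ^ (n + 1) / ((n : ℝ) + 2)) =
      fun n : ℕ => x ^ (n + 1) / (((n : ℝ) + 1) * ((n : ℝ) + 2)) := by
    funext n
    have hn1 : ((n : ℝ) + 1) ≠ 0 := by positivity
    have hn2 : ((n : ℝ) + 2) ≠ 0 := by positivity
    field_simp
    ring
  rw [he] at h2
  have : -Real.log (1 - x) - (-Real.log (1 - x) - x) / x =
      (1 - 1 / x) * (-Real.log (1 - x)) + 1 := by
    field_simp
    ring
  rwa [this] at h2

lemma hs_tele : HasSum (fun n : ℕ => (1 : ℝ) / (((n : ℝ) + 1) * ((n : ℝ) + 2))) 1 := by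
  rw [hasSum_iff_tendsto_nat_of_nonneg (by intro i; positivity)]
  have key : ∀ n : ℕ, ∑ i ∈ range n, (1 : ℝ) / (((i : ℝ) + 1) * ((i : ℝ) + 2)) =
      1 - 1 / ((n : ℝ) + 1) := by
    intro n
    have := Finset.sum_range_sub (f := fun i : ℕ => -(1 : ℝ) / ((i : ℝ) + 1)) n
    rw [show (1 : ℝ) - 1 / ((n : ℝ) + 1) =
        -(1 : ℝ) / ((n : ℝ) + 1) - -(1 : ℝ) / ((0 : ℕ) + 1) by push_cast; ring, ← this]
    apply Finset.sum_congr rfl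
    intro i _
    have hn1 : ((i : ℝ) + 1) ≠ 0 := by positivity
    have hn2 : ((i : ℝ) + 2) ≠ 0 := by positivity
    push_cast
    field_simp
    ring
  simp only [key]
  have : Filter.Tendsto (fun n : ℕ => 1 / ((n : ℝ) + 1)) Filter.atTop (nhds 0) :=
    tendsto_one_div_add_atTop_nhds_zero_nat
  have h2 := Filter.Tendsto.const_sub (1 : ℝ) this
  simpa using h2

theorem kl_diff_positive :
    (∀ l : ℕ, 1 ≤ l → 0 < 1 - (0.1 : ℝ) ^ l * (1 + (l : ℝ) + 0.1 * (l : ℝ))) ∧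
    ∀ v : ℝ, 1 ≤ v →
      (D (v - 1) (v - 0.1) - 2 * D v (v - 0.1) =
        ∑' l : ℕ, (1 / (v ^ (l + 1) * (((l + 1 : ℕ) : ℝ) * ((l + 2 : ℕ) : ℝ)))) *
          (1 - (0.1 : ℝ) ^ (l + 1) * (1 + 1.1 * ((l + 1 : ℕ) : ℝ)))) ∧
      0 < D (v - 1) (v - 0.1) - 2 * D v (v - 0.1) := by
  have part1 : ∀ l : ℕ, 1 ≤ l → 0 < 1 - (0.1 : ℝ) ^ l * (1 + (l : ℝ) + 0.1 * (l : ℝ)) := by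
    intro l hl
    have hb : 1 + (l : ℝ) * 1.1 ≤ (1 + 1.1) ^ l := one_add_mul_le_pow (by norm_num) l
    have h1 : (0.1 : ℝ) ^ l * (1 + (l : ℝ) + 0.1 * (l : ℝ)) ≤ (0.1 : ℝ) ^ l * (2.1) ^ l := by
      apply mul_le_mul_of_nonneg_left _ (by positivity)
      calc 1 + (l : ℝ) + 0.1 * l = 1 + (l : ℝ) * 1.1 := by ring
        _ ≤ (1 + 1.1) ^ l := hb
        _ = (2.1 : ℝ) ^ l := by norm_num
    have h2 : (0.1 : ℝ) ^ l * (2.1) ^ l = (0.21 : ℝ) ^ l := by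
      rw [← mul_pow]; norm_num
    have h3 : (0.21 : ℝ) ^ l ≤ 0.21 ^ 1 :=
      pow_le_pow_of_le_one (by norm_num) (by norm_num) hl
    nlinarith
  refine ⟨part1, ?_⟩
  intro v hv
  have hv0 : (0 : ℝ) < v := by linarith
  -- the summand
  set g : ℕ → ℝ := fun l =>
    (1 / (v ^ (l + 1) * (((l + 1 : ℕ) : ℝ) * ((l + 2 : ℕ) : ℝ)))) *
      (1 - (0.1 : ℝ) ^ (l + 1) * (1 + 1.1 * ((l + 1 : ℕ) : ℝ))) with hg
  have hgpos : ∀ l, 0 < g l := by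
    intro l
    have h1 := part1 (l + 1) (Nat.le_add_left 1 l)
    apply mul_pos
    · apply div_pos one_pos
      apply mul_pos (pow_pos hv0 _)
      apply mul_pos <;> positivity
    · push_cast at h1 ⊢; linarith
  -- y = 0.1 / v
  set y : ℝ := 0.1 / v with hy
  have hy0 : 0 < y := by positivity
  have hyne : y ≠ 0 := ne_of_gt hy0
  have hylt : y < 1 := by
    rw [hy, div_lt_one hv0]; linarith
  have hyabs : |y| < 1 := by rw [abs_of_pos hy0]; exact hylt
  set Ly : ℝ := -Real.log (1 - y) with hLy
  have hBy : HasSum (fun n : ℕ => y ^ (n + 1) / (((n : ℝ) + 1) * ((n : ℝ) + 2)))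
      ((1 - 1 / y) * Ly + 1) := hs_F hyne hyabs
  have hCy : HasSum (fun n : ℕ => y ^ (n + 1) / ((n : ℝ) + 2)) ((Ly - y) / y) := hs_C hyne hyabs
  -- A-sum value
  have hA : HasSum (fun n : ℕ => (1 / v) ^ (n + 1) / (((n : ℝ) + 1) * ((n : ℝ) + 2)))
      ((1 - v) * (-Real.log (1 - 1 / v)) + 1) := by
    rcases eq_or_lt_of_le hv with h1 | h1
    · have hveq : v = 1 := h1.symm
      subst hveq
      simpa using hs_tele
    · have hx0 : (0 : ℝ) < 1 / v := by positivity
      have hxlt : 1 / v < 1 := by rw [div_lt_one hv0]; exact h1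
      have := hs_F (x := 1 / v) (ne_of_gt hx0) (by rw [abs_of_pos hx0]; exact hxlt)
      have hrw : (1 - 1 / (1 / v)) = 1 - v := by
        rw [one_div_one_div]
      rwa [hrw] at this
  set Lx : ℝ := -Real.log (1 - 1 / v) with hLx
  -- total hasSum for g
  have hgsum : HasSum g ((1 - v) * Lx + 1 - ((1 - 1 / y) * Ly + 1) - 1.1 * ((Ly - y) / y)) := by
    have h := (hA.sub hBy).sub (hCy.mul_left 1.1)
    convert h using 1
    · rfl
    funext n
    have hn1 : ((n : ℝ) + 1) ≠ 0 := by positivity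
    have hn2 : ((n : ℝ) + 2) ≠ 0 := by positivity
    have hvne : v ≠ 0 := ne_of_gt hv0
    rw [hg]
    push_cast
    rw [hy]
    simp only [div_pow]
    field_simp
    ring
  -- simplify the sum value: 1/y = 10 v
  have hyinv : 1 / y = 10 * v := by
    rw [hy]; field_simp; linarith
  have hsumval : (1 - v) * Lx + 1 - ((1 - 1 / y) * Ly + 1) - 1.1 * ((Ly - y) / y) =
      -(v - 1) * Lx - (v + 1) * Ly + 1.1 := by
    have : (Ly - y) / y = Ly / y - 1 := by field_simp
    rw [this, div_eq_mul_one_div Ly y, hyinv]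
    ring
  rw [hsumval] at hgsum
  -- now the closed form of the LHS
  have hvm : (0:ℝ) < v - 0.1 := by linarith
  have hlhs : D (v - 1) (v - 0.1) - 2 * D v (v - 0.1) = -(v - 1) * Lx - (v + 1) * Ly + 1.1 := by
    have hlog2 : Real.log (v / (v - 0.1)) = Ly := by
      rw [hLy, hy]
      have : 1 - 0.1 / v = (v - 0.1) / v := by field_simp
      rw [this, Real.log_div (ne_of_gt hvm) (ne_of_gt hv0), Real.log_div (ne_of_gt hv0) (ne_of_gt hvm)]
      ring
    rcases eq_or_lt_of_le hv with h1 | h1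
    · have hveq : v = 1 := h1.symm
      subst hveq
      simp only [D, hlog2]
      have : Lx = 0 := by
        rw [hLx]; norm_num
      rw [this]
      norm_num
      ring
    · have hvm1 : (0:ℝ) < v - 1 := by linarith
      have hlog1 : Real.log ((v - 1) / (v - 0.1)) = -Lx + Ly := by
        rw [hLx, hLy, hy]
        have e1 : 1 - 1 / v = (v - 1) / v := by field_simp
        have e2 : 1 - 0.1 / v = (v - 0.1) / v := by field_simp
        rw [e1, e2, Real.log_div (ne_of_gt hvm1) (ne_of_gt hv0),
          Real.log_div (ne_of_gt hvm) (ne_of_gt hv0),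
          Real.log_div (ne_of_gt hvm1) (ne_of_gt hvm)]
        ring
      simp only [D, hlog1, hlog2]
      ring
  constructor
  · rw [hlhs, hgsum.tsum_eq]
  · rw [hlhs, ← hgsum.tsum_eq]
    exact Summable.tsum_pos hgsum.summable (fun i => (hgpos i).le) 0 (hgpos 0)
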